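/- Let X be a presheaf on the category of nonempty finite sets. If X is injective along some system of spines (one chosen spine T_n on [n] = {0,...,n} for each n ≥ 1), then X is injective along T for every spine T of every finite set with at least two elements. -/

import Mathlib

/-- A presheaf on the category `Fin₊` of nonempty finite sets and arbitrary
functions. -/
structure FinPresheaf where
  obj : (S : Type) → [Fintype S] → [Nonempty S] → Type
  map : {S T : Type} → [Fintype S] → [Nonempty S] → [Fintype T] → [Nonempty T] →
      (S → T) → obj T → obj S
  map_id : ∀ (S : Type) [Fintype S] [Nonempty S] (x : obj S), map id x = x
  map_comp : ∀ {S T U : Type} [Fintype S] [Nonempty S] [Fintype T] [Nonempty T]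
      [Fintype U] [Nonempty U] (f : S → T) (g : T → U) (x : obj U),
      map (g ∘ f) x = map f (map g x)

/-- `X` is injective along a graph `T` on `S` (for `T` a spine, i.e. a spanning
tree of the complete graph on `S`) if the map `ℰ_T : X(S) → ∏_{e ∈ E(T)} X(e)`,
whose components are restrictions along the subset inclusions `e ⊆ S`, is
injective. -/
def FinPresheaf.InjAlong (X : FinPresheaf) (S : Type) [Fintype S] [Nonempty S]
    (T : SimpleGraph S) : Prop :=
  Function.Injective fun (x : X.obj S) =>
    fun (e : T.edgeSet) =>
      letI : Fintype {a : S // a ∈ e.1} := Fintype.ofFinite {a : S // a ∈ e.1}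
      letI : Nonempty {a : S // a ∈ e.1} := ⟨⟨e.1.out.1, Sym2.out_fst_mem e.1⟩⟩
      X.map (fun v : {a : S // a ∈ e.1} => (v : S)) x

namespace FinPresheaf

/-- Two elements of `X(S)` agree on a subset `P ⊆ S` if their restrictions along
any map with range inside `P` coincide. -/
def AgreeOn (X : FinPresheaf) {S : Type} [Fintype S] [Nonempty S]
    (x y : X.obj S) (P : Set S) : Prop :=
  ∀ (A : Type) [Fintype A] [Nonempty A] (f : A → S), (∀ t, f t ∈ P) →
    X.map f x = X.map f y

lemma AgreeOn.mono {X : FinPresheaf} {S : Type} [Fintype S] [Nonempty S]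
    {x y : X.obj S} {P Q : Set S} (h : X.AgreeOn x y Q) (hPQ : P ⊆ Q) :
    X.AgreeOn x y P := fun A _ _ f hf => h A f fun t => hPQ (hf t)

lemma agreeOn_range (X : FinPresheaf) {S : Type} [Fintype S] [Nonempty S]
    {A₀ : Type} [Fintype A₀] [Nonempty A₀] (ι : A₀ → S) {x y : X.obj S}
    (h : X.map ι x = X.map ι y) : X.AgreeOn x y (Set.range ι) := by
  intro A _ _ f hf
  choose g hg using hf
  have hfg : f = ι ∘ g := funext fun t => (hg t).symm
  rw [hfg, X.map_comp, X.map_comp, h]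

lemma injective_map_equiv (X : FinPresheaf) {A B : Type} [Fintype A] [Nonempty A]
    [Fintype B] [Nonempty B] (φ : A ≃ B) :
    Function.Injective (X.map (⇑φ) : X.obj B → X.obj A) := by
  intro x y h
  have key : ∀ z : X.obj B, X.map (⇑φ.symm) (X.map (⇑φ) z) = z := by
    intro z
    rw [← X.map_comp]
    have hid : (⇑φ) ∘ (⇑φ.symm) = id := funext fun b => φ.apply_symm_apply b
    rw [hid, X.map_id]
  rw [← key x, h, key y]

/-- From a path `p : u → v` and two vertices `u', v'` on it, neither equal to `v`,
one can extract a path from `u'` to `v'` avoiding `v`. -/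
lemma subpath_avoid {V : Type} [DecidableEq V] {G : SimpleGraph V} {u v : V}
    (p : G.Walk u v) (hp : p.IsPath) (u' v' : V)
    (hu' : u' ∈ p.support) (hv' : v' ∈ p.support) (h1 : v ≠ u') (h2 : v ≠ v') :
    ∃ q : G.Walk u' v', q.IsPath ∧ v ∉ q.support := by
  have hspec := p.take_spec hv'
  have hp1 : (p.takeUntil v' hv').IsPath := hp.takeUntil hv'
  have hp2 : (p.dropUntil v' hv').IsPath := hp.dropUntil hv'
  have hsupp : p.support =
      (p.takeUntil v' hv').support ++ (p.dropUntil v' hv').support.tail := by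
    conv_lhs => rw [← hspec]
    rw [SimpleGraph.Walk.support_append]
  have hvp2t : v ∈ (p.dropUntil v' hv').support.tail := by
    have hv2 : v ∈ (p.dropUntil v' hv').support :=
      SimpleGraph.Walk.end_mem_support _
    rw [SimpleGraph.Walk.support_eq_cons] at hv2
    rcases List.mem_cons.mp hv2 with h | h
    · exact absurd h h2
    · exact h
  have hnd := hp.support_nodup
  rw [hsupp] at hnd
  have hvnot1 : v ∉ (p.takeUntil v' hv').support := fun hv =>
    List.disjoint_of_nodup_append hnd hv hvp2t
  by_cases hc : u' ∈ (p.takeUntil v' hv').support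
  · exact ⟨(p.takeUntil v' hv').dropUntil u' hc, hp1.dropUntil hc,
      fun hv => hvnot1 (SimpleGraph.Walk.support_dropUntil_subset _ _ hv)⟩
  · have hu'2 : u' ∈ (p.dropUntil v' hv').support := by
      rw [hsupp] at hu'
      rcases List.mem_append.mp hu' with h | h
      · exact absurd h hc
      · exact List.mem_of_mem_tail h
    refine ⟨((p.dropUntil v' hv').takeUntil u' hu'2).reverse,
      (hp2.takeUntil hu'2).reverse, ?_⟩
    rw [SimpleGraph.Walk.support_reverse, List.mem_reverse]
    intro hv
    have hspec2 := (p.dropUntil v' hv').take_spec hu'2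
    have hnd2 := hp2.support_nodup
    have hs2 : (p.dropUntil v' hv').support =
        ((p.dropUntil v' hv').takeUntil u' hu'2).support ++
          ((p.dropUntil v' hv').dropUntil u' hu'2).support.tail := by
      conv_lhs => rw [← hspec2]
      rw [SimpleGraph.Walk.support_append]
    rw [hs2] at hnd2
    have hvtail : v ∈ ((p.dropUntil v' hv').dropUntil u' hu'2).support.tail := by
      have hv3 : v ∈ ((p.dropUntil v' hv').dropUntil u' hu'2).support :=
        SimpleGraph.Walk.end_mem_support _
      rw [SimpleGraph.Walk.support_eq_cons] at hv3
      rcases List.mem_cons.mp hv3 with h | h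
      · exact absurd h h1
      · exact h
    exact List.disjoint_of_nodup_append hnd2 hv hvtail

/-- The main induction. -/
lemma main (X : FinPresheaf) (E : (n : ℕ) → SimpleGraph (Fin (n + 2)))
    (hE : ∀ n, (E n).IsTree) (hX : ∀ n, X.InjAlong (Fin (n + 2)) (E n)) :
    ∀ n, ∀ (S : Type) [Fintype S] [Nonempty S], Fintype.card S = n + 2 →
      ∀ T : SimpleGraph S, T.Connected →
      ∀ x y : X.obj S, (∀ u v : S, T.Adj u v → X.AgreeOn x y {w | w = u ∨ w = v}) →
      x = y := by
  intro n
  induction n using Nat.strong_induction_on with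
  | _ n ih =>
  intro S _ _ hcard T hT x y H
  classical
  cases n with
  | zero =>
    -- two-element case
    obtain ⟨u, v, huv⟩ := Fintype.exists_pair_of_one_lt_card (α := S) (by omega)
    have htot : ∀ w : S, w = u ∨ w = v := by
      intro w
      by_contra hw
      push_neg at hw
      have h3 : ({u, v, w} : Finset S).card = 3 := by
        rw [Finset.card_insert_of_notMem (by simp [huv, Ne.symm hw.1]),
          Finset.card_insert_of_notMem (by simp [Ne.symm hw.2]),
          Finset.card_singleton]
      have h4 := Finset.card_le_card (Finset.subset_univ ({u, v, w} : Finset S))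
      rw [h3, Finset.card_univ, hcard] at h4
      omega
    have hadj : T.Adj u v := by
      obtain ⟨p⟩ := hT.preconnected u v
      cases p with
      | nil => exact absurd rfl huv
      | @cons _ c _ h p' =>
        rcases htot c with rfl | rfl
        · exact absurd rfl h.ne
        · exact h
    have := H u v hadj S id htot
    rwa [X.map_id, X.map_id] at this
  | succ n' =>
    -- `key`: agreement along the support of any non-spanning path
    have key : ∀ (u v : S), u ≠ v → ∀ (q : T.Walk u v), q.IsPath →
        ∀ s0, s0 ∉ q.support → X.AgreeOn x y {w | w ∈ q.support} := by
      intro u v huv q hq s0 hs0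
      have hnd : q.support.Nodup := hq.support_nodup
      have hlen : 1 < q.support.length := by
        have hcard2 : 1 < q.support.toFinset.card := by
          rw [Finset.one_lt_card]
          exact ⟨u, by simp [q.start_mem_support], v, by simp [q.end_mem_support], huv⟩
        rwa [List.toFinset_card_of_nodup hnd] at hcard2
      have hle : q.support.length ≤ n' + 2 := by
        have h1 : q.support.toFinset ⊆ Finset.univ.erase s0 := by
          intro w hw
          rw [Finset.mem_erase]
          exact ⟨fun h => hs0 (h ▸ List.mem_toFinset.mp hw), Finset.mem_univ w⟩
        have h2 := Finset.card_le_card h1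
        rwa [Finset.card_erase_of_mem (Finset.mem_univ s0), Finset.card_univ, hcard,
          List.toFinset_card_of_nodup hnd] at h2
      set l := q.support with hl
      haveI hFS' : Fintype {w : S // w ∈ l} := Fintype.ofFinite _
      haveI hNS' : Nonempty {w : S // w ∈ l} := ⟨⟨u, q.start_mem_support⟩⟩
      let e : Fin l.length ≃ {w : S // w ∈ l} := List.Nodup.getEquiv l hnd
      have hcardS' : Fintype.card {w : S // w ∈ l} = l.length := by
        rw [← Fintype.card_congr e, Fintype.card_fin]
      let G' : SimpleGraph {w : S // w ∈ l} :=
        SimpleGraph.comap (⇑e.symm) (SimpleGraph.pathGraph l.length)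
      have hpg : (SimpleGraph.pathGraph l.length).Connected := by
        obtain ⟨m, hm⟩ : ∃ m, l.length = m + 1 := ⟨l.length - 1, by omega⟩
        rw [hm]
        exact SimpleGraph.pathGraph_connected m
      have hG'conn : G'.Connected := by
        refine hpg.map ⟨⇑e, ?_⟩ e.surjective
        intro a b hab
        show (SimpleGraph.pathGraph l.length).Adj (e.symm (e a)) (e.symm (e b))
        simpa using hab
      have hchain : List.Chain' T.Adj l := SimpleGraph.Walk.isChain_adj_support q
      have hget : ∀ (i : ℕ) (h : i < l.length - 1),
          T.Adj (l.get ⟨i, by omega⟩) (l.get ⟨i + 1, by omega⟩) := fun i h => by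
        simpa using List.isChain_iff_getElem.mp hchain i (by omega)
      have hval : ∀ c : {w : S // w ∈ l}, (c : S) = l.get (e.symm c) := by
        intro c
        conv_lhs => rw [← e.apply_symm_apply c]
        rfl
      have hadjT : ∀ a b : {w : S // w ∈ l}, G'.Adj a b → T.Adj ↑a ↑b := by
        intro a b hab
        have hab' : (SimpleGraph.pathGraph l.length).Adj (e.symm a) (e.symm b) := hab
        rw [SimpleGraph.pathGraph_adj] at hab'
        rw [hval a, hval b]
        rcases hab' with h | h
        · have hlt : (e.symm a).val < l.length - 1 := by
            have := (e.symm b).isLt; omega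
          have := hget (e.symm a).val hlt
          have ha' : l.get (e.symm a) = l.get ⟨(e.symm a).val, by omega⟩ :=
            congrArg l.get (Fin.ext rfl)
          have hb' : l.get (e.symm b) = l.get ⟨(e.symm a).val + 1, by omega⟩ :=
            congrArg l.get (Fin.ext h.symm)
          rw [ha', hb']
          exact this
        · have hlt : (e.symm b).val < l.length - 1 := by
            have := (e.symm a).isLt; omega
          have := hget (e.symm b).val hlt
          have hb' : l.get (e.symm b) = l.get ⟨(e.symm b).val, by omega⟩ :=
            congrArg l.get (Fin.ext rfl)
          have ha' : l.get (e.symm a) = l.get ⟨(e.symm b).val + 1, by omega⟩ :=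
            congrArg l.get (Fin.ext h.symm)
          rw [ha', hb']
          exact this.symm
      let ι : {w : S // w ∈ l} → S := Subtype.val
      have H' : ∀ a b : {w : S // w ∈ l}, G'.Adj a b →
          X.AgreeOn (X.map ι x) (X.map ι y) {w | w = a ∨ w = b} := by
        intro a b hab A _ _ f hf
        have h1 : ∀ t, (ι ∘ f) t ∈ {w | w = (a : S) ∨ w = (b : S)} := by
          intro t
          rcases hf t with h | h
          · exact Or.inl (by simp [ι, h])
          · exact Or.inr (by simp [ι, h])
        have h2 := H ↑a ↑b (hadjT a b hab) A (ι ∘ f) h1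
        rwa [X.map_comp, X.map_comp] at h2
      have hxy' : X.map ι x = X.map ι y := by
        refine ih (l.length - 2) (by omega) {w : S // w ∈ l} (by omega) G' hG'conn
          (X.map ι x) (X.map ι y) H'
      intro A _ _ f hf
      have hfactor : f = ι ∘ (fun t => (⟨f t, hf t⟩ : {w : S // w ∈ l})) := rfl
      rw [hfactor, X.map_comp, X.map_comp, hxy']
    -- a "forbidden" pair such that all other pairs admit non-spanning paths
    obtain ⟨u0, v0, hne0, hgood⟩ :
        ∃ u0 v0 : S, u0 ≠ v0 ∧ ∀ u' v' : S, u' ≠ v' →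
          ¬(u' = u0 ∧ v' = v0) → ¬(u' = v0 ∧ v' = u0) →
          ∃ q : T.Walk u' v', q.IsPath ∧ ∃ s0, s0 ∉ q.support := by
      by_cases hbad : ∃ u v : S, u ≠ v ∧
          ¬ ∃ q : T.Walk u v, q.IsPath ∧ ∃ s0, s0 ∉ q.support
      · obtain ⟨u0, v0, hne0, hb⟩ := hbad
        refine ⟨u0, v0, hne0, ?_⟩
        obtain ⟨w⟩ := hT.preconnected u0 v0
        have hp : (w.toPath : T.Walk u0 v0).IsPath := w.toPath.2
        have hspan : ∀ s : S, s ∈ (w.toPath : T.Walk u0 v0).support := by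
          intro s
          by_contra hs
          exact hb ⟨w.toPath, hp, s, hs⟩
        intro u' v' hne' hne1 hne2
        have hsplit : (v0 ≠ u' ∧ v0 ≠ v') ∨ (u0 ≠ u' ∧ u0 ≠ v') := by
          by_cases h1 : v0 = u'
          · refine Or.inr ⟨?_, ?_⟩
            · intro h; exact hne0 (h.trans h1.symm)
            · intro h; exact hne2 ⟨h1.symm, h.symm⟩
          · by_cases h2 : v0 = v'
            · refine Or.inr ⟨?_, ?_⟩
              · intro h; exact hne1 ⟨h.symm, h2.symm⟩
              · intro h; exact hne0 (h.trans h2.symm)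
            · exact Or.inl ⟨h1, h2⟩
        rcases hsplit with ⟨ha, hb'⟩ | ⟨ha, hb'⟩
        · obtain ⟨q, hq, hv⟩ := subpath_avoid (w.toPath : T.Walk u0 v0) hp u' v'
            (hspan u') (hspan v') ha hb'
          exact ⟨q, hq, v0, hv⟩
        · obtain ⟨q, hq, hv⟩ := subpath_avoid (w.toPath : T.Walk u0 v0).reverse
            hp.reverse u' v'
            (by rw [SimpleGraph.Walk.support_reverse, List.mem_reverse]; exact hspan u')
            (by rw [SimpleGraph.Walk.support_reverse, List.mem_reverse]; exact hspan v')
            ha hb'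
          exact ⟨q, hq, u0, hv⟩
      · push_neg at hbad
        obtain ⟨u0, v0, hne0⟩ := Fintype.exists_pair_of_one_lt_card
          (by rw [hcard]; omega)
        exact ⟨u0, v0, hne0, fun u' v' h _ _ => hbad u' v' h⟩
    -- a non-adjacent pair in the given spine `E (n' + 1)`
    obtain ⟨p0, q0, hpq0, hnadj⟩ :
        ∃ p q : Fin (n' + 1 + 2), p ≠ q ∧ ¬ (E (n' + 1)).Adj p q := by
      by_contra hc
      push_neg at hc
      have htop : E (n' + 1) = ⊤ := by
        ext a b
        simp only [SimpleGraph.top_adj]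
        exact ⟨fun h => h.ne, fun h => hc a b h⟩
      have hEn := hE (n' + 1)
      rw [htop] at hEn
      have h1 := hEn.card_edgeFinset
      have h1' := SimpleGraph.card_edgeFinset_top_eq_card_choose_two (V := Fin (n' + 1 + 2))
      have h4 : Fintype.card (Fin (n' + 1 + 2)) = n' + 3 := by
        rw [Fintype.card_fin]
      rw [h4] at h1 h1'
      have h2 : (n' + 3).choose 2 = (n' + 3) * (n' + 2) / 2 := by
        rw [Nat.choose_two_right]
        norm_num
      have h3 : n' + 3 ≤ (n' + 3) * (n' + 2) / 2 := by
        rw [Nat.le_div_iff_mul_le (by norm_num)]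
        exact Nat.mul_le_mul_left _ (by omega)
      omega
    -- the bijection `Fin (n'+3) ≃ S` sending the non-edge to the forbidden pair
    let ψ : Fin (n' + 1 + 2) ≃ S := Fintype.equivOfCardEq (by rw [Fintype.card_fin, hcard])
    let σ1 : S ≃ S := Equiv.swap (ψ p0) u0
    let σ2 : S ≃ S := Equiv.swap (σ1 (ψ q0)) v0
    let φ : Fin (n' + 1 + 2) ≃ S := ψ.trans (σ1.trans σ2)
    have hφp : φ p0 = u0 := by
      show σ2 (σ1 (ψ p0)) = u0
      have h1 : σ1 (ψ p0) = u0 := Equiv.swap_apply_left _ _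
      rw [h1]
      refine Equiv.swap_apply_of_ne_of_ne ?_ hne0
      intro h
      exact hpq0 (ψ.injective (σ1.injective (h.symm.trans h1.symm ▸ rfl)))
    have hφq : φ q0 = v0 := by
      show σ2 (σ1 (ψ q0)) = v0
      exact Equiv.swap_apply_left _ _
    -- conclude using injectivity along `E (n'+1)`
    have hφxy : X.map (⇑φ) x = X.map (⇑φ) y := by
      apply hX (n' + 1)
      funext ed
      obtain ⟨ed, he⟩ := ed
      induction ed using Sym2.ind with
      | _ p' q' =>
        have hadj : (E (n' + 1)).Adj p' q' := he
        have hne' : φ p' ≠ φ q' := fun h => hadj.ne (φ.injective h)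
        have hnot1 : ¬(φ p' = u0 ∧ φ q' = v0) := by
          rintro ⟨h1', h2'⟩
          apply hnadj
          have hp' : p' = p0 := φ.injective (h1'.trans hφp.symm)
          have hq' : q' = q0 := φ.injective (h2'.trans hφq.symm)
          rw [← hp', ← hq']
          exact hadj
        have hnot2 : ¬(φ p' = v0 ∧ φ q' = u0) := by
          rintro ⟨h1', h2'⟩
          apply hnadj
          have hp' : p' = q0 := φ.injective (h1'.trans hφq.symm)
          have hq' : q' = p0 := φ.injective (h2'.trans hφp.symm)
          rw [hp', hq'] at hadj
          exact hadj.symm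
        obtain ⟨q, hq, s0, hs0⟩ := hgood (φ p') (φ q') hne' hnot1 hnot2
        have hA := key (φ p') (φ q') hne' q hq s0 hs0
        letI : Fintype {a : Fin (n' + 1 + 2) // a ∈ s(p', q')} := Fintype.ofFinite _
        letI : Nonempty {a : Fin (n' + 1 + 2) // a ∈ s(p', q')} :=
          ⟨⟨p', Sym2.mem_mk_left _ _⟩⟩
        show X.map (fun v : {a : Fin (n' + 1 + 2) // a ∈ s(p', q')} =>
            (v : Fin (n' + 1 + 2))) (X.map (⇑φ) x)
          = X.map (fun v : {a : Fin (n' + 1 + 2) // a ∈ s(p', q')} =>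
            (v : Fin (n' + 1 + 2))) (X.map (⇑φ) y)
        rw [← X.map_comp, ← X.map_comp]
        refine hA _ _ ?_
        intro t
        rcases Sym2.mem_iff.mp t.2 with h | h
        · show φ (t : Fin (n' + 1 + 2)) ∈ q.support
          rw [h]
          exact q.start_mem_support
        · show φ (t : Fin (n' + 1 + 2)) ∈ q.support
          rw [h]
          exact q.end_mem_support
    exact X.injective_map_equiv φ hφxy

end FinPresheaf

/-- If a presheaf `X` on nonempty finite sets is injective
along some system of spines (one spanning tree `E n` of the complete graph on
`[n+1] = Fin (n + 2)` for each `n`, i.e. on each `[m]` for `m ≥ 1`), then `X` is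
injective along every spine `T` of every finite set `S` with at least two
elements. -/
theorem injAlong_all_of_system (X : FinPresheaf) (E : (n : ℕ) → SimpleGraph (Fin (n + 2)))
    (hE : ∀ n, (E n).IsTree) (hX : ∀ n, X.InjAlong (Fin (n + 2)) (E n)) :
    ∀ (S : Type) [Fintype S] [Nonempty S], 2 ≤ Fintype.card S →
      ∀ T : SimpleGraph S, T.IsTree → X.InjAlong S T := by
  intro S _ _ hcard2 T hT
  intro x y hxy
  obtain ⟨n, hcard⟩ : ∃ n, Fintype.card S = n + 2 := ⟨Fintype.card S - 2, by omega⟩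
  apply X.main E hE hX n S hcard T hT.isConnected
  intro u v huv
  have he : s(u, v) ∈ T.edgeSet := T.mem_edgeSet.mpr huv
  have hcomp := congrFun hxy ⟨s(u, v), he⟩
  letI : Fintype {a : S // a ∈ s(u, v)} := Fintype.ofFinite _
  haveI : Nonempty {a : S // a ∈ s(u, v)} := ⟨⟨u, Sym2.mem_mk_left _ _⟩⟩
  have h2 : X.map (fun a : {a : S // a ∈ s(u, v)} => (a : S)) x
      = X.map (fun a : {a : S // a ∈ s(u, v)} => (a : S)) y := hcomp
  refine (X.agreeOn_range (fun a : {a : S // a ∈ s(u, v)} => (a : S)) h2).mono ?_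
  rintro w (rfl | rfl)
  · exact ⟨⟨w, Sym2.mem_mk_left _ _⟩, rfl⟩
  · exact ⟨⟨w, Sym2.mem_mk_right _ _⟩, rfl⟩
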